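/- Let m and k be positive integers and let P ⊆ ℝ^m × ℝ^k be the polytope of pairs (a, b) satisfying 0 ≤ a_j ≤ 1 for all j ∈ {1,…,m}, 0 ≤ b_l ≤ 1 for all l ∈ {1,…,k}, ∑_{j=1}^m a_j ≥ b_l for every l, and a_j ≤ ∑_{l=1}^k b_l for every j. Then P equals the convex hull of its points all of whose coordinates lie in {0,1}; that is, the linear relaxation of the integer-programming description of a single equivalence clause is integral. -/

import Mathlib

open MeasureTheory Set


private noncomputable def cumArc (c : ℝ) (x : ℕ → ℝ) : ℕ → ℝ := fun n =>
  Nat.rec 0 (fun i u => if u + x i < c then u + x i else u + x i - c) n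

private lemma cumArc_zero (c : ℝ) (x : ℕ → ℝ) : cumArc c x 0 = 0 := rfl

private lemma cumArc_succ (c : ℝ) (x : ℕ → ℝ) (i : ℕ) :
    cumArc c x (i+1) =
      if cumArc c x i + x i < c then cumArc c x i + x i else cumArc c x i + x i - c := rfl

private def arcOf (c : ℝ) (x : ℕ → ℝ) (i : ℕ) : Set ℝ :=
  Set.Ico (cumArc c x i) (min (cumArc c x i + x i) c) ∪
    Set.Ico 0 (cumArc c x i + x i - c)

private lemma cumArc_mem {c : ℝ} {x : ℕ → ℝ} (hc : 0 < c) (hx0 : ∀ i, 0 ≤ x i)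
    (hxc : ∀ i, x i ≤ c) : ∀ i, 0 ≤ cumArc c x i ∧ cumArc c x i < c := by
  intro i
  induction i with
  | zero => exact ⟨le_refl _, hc⟩

  | succ i ih =>
    rw [cumArc_succ]
    split_ifs with h
    · exact ⟨add_nonneg ih.1 (hx0 i), h⟩
    · constructor
      · linarith [not_lt.mp h]
      · have := hxc i; have := ih.2; linarith

private lemma arc_decomposition {n : ℕ} (x : Fin n → ℝ) (c : ℝ) (hc : 0 < c)
    (hx0 : ∀ i, 0 ≤ x i) (hxc : ∀ i, x i ≤ c) (hsum : c ≤ ∑ i, x i) :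
    ∃ Arc : Fin n → Set ℝ,
      (∀ i, MeasurableSet (Arc i)) ∧
      (∀ i, Arc i ⊆ Set.Ico 0 c) ∧
      (∀ i, volume (Arc i) = ENNReal.ofReal (x i)) ∧
      (∀ t ∈ Set.Ico (0:ℝ) c, ∃ i, t ∈ Arc i) := by
  classical
  set x' : ℕ → ℝ := fun i => if h : i < n then x ⟨i, h⟩ else 0 with hx'
  have hx'0 : ∀ i, 0 ≤ x' i := by
    intro i; simp only [hx']; split_ifs with h
    exacts [hx0 _, le_rfl]
  have hx'c : ∀ i, x' i ≤ c := by
    intro i; simp only [hx']; split_ifs with h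
    exacts [hxc _, hc.le]
  have hu := cumArc_mem hc hx'0 hx'c
  refine ⟨fun i => arcOf c x' i, ?_, ?_, ?_, ?_⟩
  · intro i
    exact (measurableSet_Ico.union measurableSet_Ico)
  · intro i t ht
    rcases ht with ht | ht
    · exact ⟨le_trans (hu i).1 ht.1, lt_of_lt_of_le ht.2 (min_le_right _ _)⟩
    · refine ⟨ht.1, lt_of_lt_of_le ht.2 ?_⟩
      have := (hu i).2; have := hx'c (i : ℕ); linarith
  · intro i
    have hdisj : Disjoint (Set.Ico (cumArc c x' i) (min (cumArc c x' i + x' i) c))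
        (Set.Ico (0:ℝ) (cumArc c x' i + x' i - c)) := by
      apply Set.disjoint_left.2
      intro t ht1 ht2
      have := hx'c (i : ℕ)
      have h1 := ht1.1
      have h2 := ht2.2
      linarith
    simp only [arcOf]
    rw [measure_union hdisj measurableSet_Ico, Real.volume_Ico, Real.volume_Ico]
    have hxx : x' (i:ℕ) = x i := by simp [hx']
    by_cases h : cumArc c x' i + x' i ≤ c
    · rw [min_eq_left h]
      have h2 : ENNReal.ofReal (cumArc c x' ↑i + x' ↑i - c - 0) = 0 :=
        ENNReal.ofReal_eq_zero.2 (by linarith)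
      rw [h2, add_zero]
      congr 1
      linarith [hxx]
    · push_neg at h
      rw [min_eq_right h.le]
      rw [← ENNReal.ofReal_add (by linarith [(hu (i:ℕ)).2]) (by linarith)]
      congr 1
      linarith [hxx]
  · -- coverage
    intro t ht
    set A : ℕ → ℝ := fun j => ∑ i ∈ Finset.range j, x' i with hA
    have key : ∀ j : ℕ, (A j < c → cumArc c x' j = A j) ∧
        (∀ s : ℝ, 0 ≤ s → s < c → s < A j → ∃ i, i < j ∧ s ∈ arcOf c x' i) := by
      intro j
      induction j with
      | zero =>
        constructor
        · intro _; rfl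
        · intro s hs0 _ hs
          exfalso
          simp only [hA, Finset.range_zero, Finset.sum_empty] at hs
          linarith
      | succ j ih =>
        have hAsucc : A (j+1) = A j + x' j := by simp [hA, Finset.sum_range_succ]
        by_cases hAj : A j < c
        · have huj : cumArc c x' j = A j := ih.1 hAj
          constructor
          · intro hlt
            rw [cumArc_succ, huj, if_pos (by rw [← hAsucc]; exact hlt)]
            exact hAsucc.symm
          · intro s hs0 hsc hsA
            by_cases hsAj : s < A j
            · obtain ⟨i, hi, hmem⟩ := ih.2 s hs0 hsc hsAj
              exact ⟨i, Nat.lt_succ_of_lt hi, hmem⟩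
            · push_neg at hsAj
              refine ⟨j, Nat.lt_succ_self j, Or.inl ⟨by rw [huj]; exact hsAj, ?_⟩⟩
              rw [lt_min_iff]
              exact ⟨by rw [huj]; rw [hAsucc] at hsA; exact hsA, hsc⟩
        · push_neg at hAj
          constructor
          · intro hlt
            exfalso
            have : A j ≤ A (j+1) := by rw [hAsucc]; linarith [hx'0 j]
            linarith
          · intro s hs0 hsc hsA
            obtain ⟨i, hi, hmem⟩ := ih.2 s hs0 hsc (lt_of_lt_of_le hsc hAj)
            exact ⟨i, Nat.lt_succ_of_lt hi, hmem⟩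
    have hAn : A n = ∑ i, x i := by
      simp only [hA]
      rw [← Fin.sum_univ_eq_sum_range (fun i => x' i) n]
      apply Finset.sum_congr rfl
      intro i _
      simp [hx']
    obtain ⟨i, hi, hmem⟩ := (key n).2 t ht.1 ht.2 (by rw [hAn]; exact lt_of_lt_of_le ht.2 hsum)
    exact ⟨⟨i, hi⟩, hmem⟩


/-- Integrality of the LP relaxation of a single equivalence clause
`(⋁_{j=1}^m A_j) ↔ (⋁_{l=1}^k B_l)`: the polytope defined by
`0 ≤ a_j, b_l ≤ 1`, `b_l ≤ ∑_j a_j` and `a_j ≤ ∑_l b_l` equals the convex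
hull of its 0/1 points. -/
theorem single_clause_polytope_integral (m k : ℕ) (hm : 0 < m) (hk : 0 < k) :
    let P : Set ((Fin m → ℝ) × (Fin k → ℝ)) :=
      {p | (∀ j, 0 ≤ p.1 j ∧ p.1 j ≤ 1) ∧ (∀ l, 0 ≤ p.2 l ∧ p.2 l ≤ 1) ∧
           (∀ l, p.2 l ≤ ∑ j, p.1 j) ∧ (∀ j, p.1 j ≤ ∑ l, p.2 l)}
    P = convexHull ℝ
      {p ∈ P | (∀ j, p.1 j = 0 ∨ p.1 j = 1) ∧ (∀ l, p.2 l = 0 ∨ p.2 l = 1)} := by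
  classical
  intro P
  set V : Set ((Fin m → ℝ) × (Fin k → ℝ)) :=
    {p ∈ P | (∀ j, p.1 j = 0 ∨ p.1 j = 1) ∧ (∀ l, p.2 l = 0 ∨ p.2 l = 1)} with hV
  have hPconv : Convex ℝ P := by
    intro x hx y hy α β hα hβ hαβ
    obtain ⟨hx1, hx2, hx3, hx4⟩ := hx
    obtain ⟨hy1, hy2, hy3, hy4⟩ := hy
    refine ⟨fun j => ?_, fun l => ?_, fun l => ?_, fun j => ?_⟩ <;>
      simp only [Prod.fst_add, Prod.snd_add, Prod.smul_fst, Prod.smul_snd,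
        Pi.add_apply, Pi.smul_apply, smul_eq_mul, Finset.sum_add_distrib,
        ← Finset.mul_sum]
    · constructor
      · have := (hx1 j).1; have := (hy1 j).1; positivity
      · nlinarith [(hx1 j).2, (hy1 j).2]
    · constructor
      · have := (hx2 l).1; have := (hy2 l).1; positivity
      · nlinarith [(hx2 l).2, (hy2 l).2]
    · nlinarith [hx3 l, hy3 l]
    · nlinarith [hx4 j, hy4 j]
  have hVsub : V ⊆ P := fun q hq => hq.1
  have hVfin : V.Finite := by
    apply Set.Finite.subset (Set.Finite.prod
      (Set.Finite.pi (fun _ : Fin m => Set.toFinite ({0, 1} : Set ℝ)))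
      (Set.Finite.pi (fun _ : Fin k => Set.toFinite ({0, 1} : Set ℝ))))
    rintro z ⟨-, hz1, hz2⟩
    constructor
    · intro j _
      rcases hz1 j with h | h <;> simp [h]
    · intro l _
      rcases hz2 l with h | h <;> simp [h]
  have hclosed : IsClosed (convexHull ℝ V) := (hVfin.isCompact_convexHull (𝕜 := ℝ)).isClosed
  apply Set.Subset.antisymm
  · -- P ⊆ convexHull V
    intro p hp
    obtain ⟨hp1, hp2, hp3, hp4⟩ := hp
    set Sa : ℝ := ∑ j, p.1 j with hSa
    set Sb : ℝ := ∑ l, p.2 l with hSb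
    set c : ℝ := min (min Sa Sb) 1 with hc
    have hSa0 : 0 ≤ Sa := Finset.sum_nonneg fun j _ => (hp1 j).1
    have hSb0 : 0 ≤ Sb := Finset.sum_nonneg fun l _ => (hp2 l).1
    have hc1 : c ≤ 1 := min_le_right _ _
    have hcSa : c ≤ Sa := le_trans (min_le_left _ _) (min_le_left _ _)
    have hcSb : c ≤ Sb := le_trans (min_le_left _ _) (min_le_right _ _)
    rcases lt_or_ge 0 c with hcpos | hc0
    · -- main case
      have hac : ∀ j, p.1 j ≤ c := fun j => le_min (le_min
        (Finset.single_le_sum (fun i _ => (hp1 i).1) (Finset.mem_univ j)) (hp4 j)) (hp1 j).2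
      have hbc : ∀ l, p.2 l ≤ c := fun l => le_min (le_min
        (hp3 l) (Finset.single_le_sum
          (fun i _ => (hp2 i).1) (Finset.mem_univ l))) (hp2 l).2
      obtain ⟨ArcA, hAm, hAsub, hAvol, hAcov⟩ :=
        arc_decomposition p.1 c hcpos (fun j => (hp1 j).1) hac hcSa
      obtain ⟨ArcB, hBm, hBsub, hBvol, hBcov⟩ :=
        arc_decomposition p.2 c hcpos (fun l => (hp2 l).1) hbc hcSb
      set vA : Fin m → (Fin m → ℝ) × (Fin k → ℝ) := fun j => (Pi.single j 1, 0) with hvA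
      set vB : Fin k → (Fin m → ℝ) × (Fin k → ℝ) := fun l => (0, Pi.single l 1) with hvB
      set q : ℝ → (Fin m → ℝ) × (Fin k → ℝ) := fun t =>
        (∑ j, (ArcA j).indicator (fun _ => vA j) t) +
        ∑ l, (ArcB l).indicator (fun _ => vB l) t with hq
      set μ : Measure ℝ := volume.restrict (Set.Ico 0 c) with hμ
      haveI : IsFiniteMeasure μ := by
        constructor
        rw [hμ, Measure.restrict_apply_univ, Real.volume_Ico]
        exact ENNReal.ofReal_lt_top
      haveI : NeZero μ := by
        refine ⟨fun h => ?_⟩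
        rw [hμ, Measure.restrict_eq_zero, Real.volume_Ico] at h
        exact (ENNReal.ofReal_pos.2 (by linarith)).ne' h
      have hq1 : ∀ t j0, (q t).1 j0 = if t ∈ ArcA j0 then (1:ℝ) else 0 := by
        intro t j0
        have h2 : (∑ l, (ArcB l).indicator (fun _ => vB l) t).1 j0 = 0 := by
          rw [Prod.fst_sum, Finset.sum_apply]
          apply Finset.sum_eq_zero
          intro l _
          simp [hvB, Set.indicator_apply, apply_ite Prod.fst]
        have h1 : (∑ j, (ArcA j).indicator (fun _ => vA j) t).1 j0
            = if t ∈ ArcA j0 then (1:ℝ) else 0 := by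
          rw [Prod.fst_sum, Finset.sum_apply]
          rw [Finset.sum_eq_single j0]
          · simp only [hvA, Set.indicator_apply, apply_ite Prod.fst]
            split_ifs <;> simp
          · intro j _ hne
            simp only [hvA, Set.indicator_apply, apply_ite Prod.fst]
            split_ifs <;> simp [Pi.single_apply, (Ne.symm hne : ¬ j0 = j)]
          · intro h; exact absurd (Finset.mem_univ _) h
        calc (q t).1 j0 = (∑ j, (ArcA j).indicator (fun _ => vA j) t).1 j0 +
            (∑ l, (ArcB l).indicator (fun _ => vB l) t).1 j0 := by
              rw [hq]; simp [Prod.fst_add]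
        _ = if t ∈ ArcA j0 then (1:ℝ) else 0 := by rw [h1, h2, add_zero]
      have hq2 : ∀ t l0, (q t).2 l0 = if t ∈ ArcB l0 then (1:ℝ) else 0 := by
        intro t l0
        have h2 : (∑ j, (ArcA j).indicator (fun _ => vA j) t).2 l0 = 0 := by
          rw [Prod.snd_sum, Finset.sum_apply]
          apply Finset.sum_eq_zero
          intro j _
          simp [hvA, Set.indicator_apply, apply_ite Prod.snd]
        have h1 : (∑ l, (ArcB l).indicator (fun _ => vB l) t).2 l0
            = if t ∈ ArcB l0 then (1:ℝ) else 0 := by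
          rw [Prod.snd_sum, Finset.sum_apply]
          rw [Finset.sum_eq_single l0]
          · simp only [hvB, Set.indicator_apply, apply_ite Prod.snd]
            split_ifs <;> simp
          · intro l _ hne
            simp only [hvB, Set.indicator_apply, apply_ite Prod.snd]
            split_ifs <;> simp [Pi.single_apply, (Ne.symm hne : ¬ l0 = l)]
          · intro h; exact absurd (Finset.mem_univ _) h
        calc (q t).2 l0 = (∑ j, (ArcA j).indicator (fun _ => vA j) t).2 l0 +
            (∑ l, (ArcB l).indicator (fun _ => vB l) t).2 l0 := by
              rw [hq]; simp [Prod.snd_add]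
        _ = if t ∈ ArcB l0 then (1:ℝ) else 0 := by rw [h2, h1, zero_add]
      have hmemV : ∀ t ∈ Set.Ico (0:ℝ) c, q t ∈ V := by
        intro t ht
        obtain ⟨j0, hj0⟩ := hAcov t ht
        obtain ⟨l0, hl0⟩ := hBcov t ht
        have hnn1 : ∀ j, 0 ≤ (q t).1 j := by
          intro j; rw [hq1]; split_ifs <;> norm_num
        have hnn2 : ∀ l, 0 ≤ (q t).2 l := by
          intro l; rw [hq2]; split_ifs <;> norm_num
        have hsum1 : (1:ℝ) ≤ ∑ j, (q t).1 j := by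
          calc (1:ℝ) = (q t).1 j0 := by rw [hq1, if_pos hj0]
          _ ≤ ∑ j, (q t).1 j :=
            Finset.single_le_sum (fun i _ => hnn1 i) (Finset.mem_univ j0)
        have hsum2 : (1:ℝ) ≤ ∑ l, (q t).2 l := by
          calc (1:ℝ) = (q t).2 l0 := by rw [hq2, if_pos hl0]
          _ ≤ ∑ l, (q t).2 l :=
            Finset.single_le_sum (fun i _ => hnn2 i) (Finset.mem_univ l0)
        refine ⟨⟨fun j => ⟨hnn1 j, ?_⟩, fun l => ⟨hnn2 l, ?_⟩, fun l => ?_, fun j => ?_⟩,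
          fun j => ?_, fun l => ?_⟩
        · rw [hq1]; split_ifs <;> norm_num
        · rw [hq2]; split_ifs <;> norm_num
        · rw [hq2]; split_ifs with h
          · exact hsum1
          · exact Finset.sum_nonneg fun i _ => hnn1 i
        · rw [hq1]; split_ifs with h
          · exact hsum2
          · exact Finset.sum_nonneg fun i _ => hnn2 i
        · rw [hq1]; split_ifs
          · exact Or.inr rfl
          · exact Or.inl rfl
        · rw [hq2]; split_ifs
          · exact Or.inr rfl
          · exact Or.inl rfl
      have hintA : ∀ j, Integrable ((ArcA j).indicator (fun _ => vA j)) μ := fun j =>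
        (integrable_indicator_iff (hAm j)).2 (integrableOn_const (measure_lt_top μ _).ne)
      have hintB : ∀ l, Integrable ((ArcB l).indicator (fun _ => vB l)) μ := fun l =>
        (integrable_indicator_iff (hBm l)).2 (integrableOn_const (measure_lt_top μ _).ne)
      have hqint : Integrable q μ := by
        rw [hq]
        exact (integrable_finset_sum _ fun j _ => hintA j).add
          (integrable_finset_sum _ fun l _ => hintB l)
      have hIq : ∫ t, q t ∂μ = p := by
        rw [hq]
        rw [integral_add (integrable_finset_sum _ fun j _ => hintA j)
            (integrable_finset_sum _ fun l _ => hintB l),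
          integral_finset_sum _ fun j _ => hintA j,
          integral_finset_sum _ fun l _ => hintB l]
        have hA1 : ∀ j : Fin m, ∫ t, (ArcA j).indicator (fun _ => vA j) t ∂μ = p.1 j • vA j := by
          intro j
          rw [integral_indicator_const (vA j) (hAm j), hμ, measureReal_def, Measure.restrict_apply (hAm j),
            Set.inter_eq_self_of_subset_left (hAsub j), hAvol j,
            ENNReal.toReal_ofReal (hp1 j).1]
        have hB1 : ∀ l : Fin k, ∫ t, (ArcB l).indicator (fun _ => vB l) t ∂μ = p.2 l • vB l := by
          intro l
          rw [integral_indicator_const (vB l) (hBm l), hμ, measureReal_def, Measure.restrict_apply (hBm l),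
            Set.inter_eq_self_of_subset_left (hBsub l), hBvol l,
            ENNReal.toReal_ofReal (hp2 l).1]
        rw [Finset.sum_congr rfl fun j _ => hA1 j, Finset.sum_congr rfl fun l _ => hB1 l]
        apply Prod.ext
        · funext i0
          simp only [Prod.fst_add, Prod.fst_sum, Pi.add_apply, Finset.sum_apply, hvA, hvB,
            Prod.smul_fst, Prod.smul_snd, Prod.fst_zero, smul_zero, Finset.sum_const_zero,
            Pi.zero_apply, add_zero, Pi.smul_apply, Pi.single_apply, smul_eq_mul, mul_ite,
            mul_one, mul_zero]
          simp [Finset.sum_ite_eq]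
        · funext i0
          simp only [Prod.snd_add, Prod.snd_sum, Pi.add_apply, Finset.sum_apply, hvA, hvB,
            Prod.smul_fst, Prod.smul_snd, Prod.snd_zero, smul_zero, Finset.sum_const_zero,
            Pi.zero_apply, zero_add, Pi.smul_apply, Pi.single_apply, smul_eq_mul, mul_ite,
            mul_one, mul_zero]
          simp [Finset.sum_ite_eq]
      have hae : ∀ᵐ t ∂μ, q t ∈ V := by
        rw [hμ, ae_restrict_iff' measurableSet_Ico]
        exact Filter.Eventually.of_forall hmemV
      have havg : (⨍ t, q t ∂μ) ∈ convexHull ℝ V :=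
        (convex_convexHull ℝ V).average_mem hclosed
          (hae.mono fun t ht => subset_convexHull ℝ V ht) hqint
      have h0V : (0 : (Fin m → ℝ) × (Fin k → ℝ)) ∈ V := by
        refine ⟨⟨fun j => ?_, fun l => ?_, fun l => ?_, fun j => ?_⟩,
          fun j => Or.inl rfl, fun l => Or.inl rfl⟩ <;> simp
      have hμuniv : (μ Set.univ).toReal = c := by
        rw [hμ, Measure.restrict_apply_univ, Real.volume_Ico, sub_zero,
          ENNReal.toReal_ofReal hcpos.le]
      have hfinal : p = c • (⨍ t, q t ∂μ) + (1 - c) • (0 : (Fin m → ℝ) × (Fin k → ℝ)) := by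
        rw [smul_zero, add_zero, average_eq, measureReal_def, hμuniv, hIq, smul_smul,
          mul_inv_cancel₀ (ne_of_gt hcpos), one_smul]
      rw [hfinal]
      exact (convex_convexHull ℝ V) havg (subset_convexHull ℝ V h0V) hcpos.le
        (by linarith) (by ring)
    · -- degenerate case : p = 0
      have hmin : min Sa Sb ≤ 0 := by
        by_contra hpos
        push_neg at hpos
        have : 0 < c := by rw [hc]; exact lt_min hpos one_pos
        linarith
      have hzero : (∀ j, p.1 j = 0) ∧ (∀ l, p.2 l = 0) := by
        rcases min_le_iff.1 hmin with hS | hS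
        · have ha : ∀ j, p.1 j = 0 := by
            intro j
            have hle : p.1 j ≤ Sa := Finset.single_le_sum (fun i _ => (hp1 i).1) (Finset.mem_univ j)
            exact le_antisymm (by linarith) (hp1 j).1
          refine ⟨ha, fun l => le_antisymm ?_ (hp2 l).1⟩
          have := hp3 l; linarith
        · have hb : ∀ l, p.2 l = 0 := by
            intro l
            have hle : p.2 l ≤ Sb := Finset.single_le_sum (fun i _ => (hp2 i).1) (Finset.mem_univ l)
            exact le_antisymm (by linarith) (hp2 l).1
          refine ⟨fun j => le_antisymm ?_ (hp1 j).1, hb⟩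
          have := hp4 j; linarith
      exact subset_convexHull ℝ V ⟨⟨hp1, hp2, hp3, hp4⟩,
        fun j => Or.inl (hzero.1 j), fun l => Or.inl (hzero.2 l)⟩
  · exact convexHull_min hVsub hPconv
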